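/- Let μ be a bounded measured lamination on the punctured hyperbolic surface (or leaf) such that its support contains a geodesic g with an endpoint at a cusp, and suppose the support is invariant under powers A^{kn} (n ∈ ℕ, fixed k > 0) of the parabolic element A fixing that cusp. If g is an isolated leaf of the support carrying an atom of mass m > 0, then the transverse measure μ is unbounded: sup over unit-length geodesic arcs I of μ(I) = ∞. Hence no bounded measured lamination invariant under a parabolic in this way can contain a geodesic ending at the cusp with positive atomic mass. -/

import Mathlib

open Complex MeasureTheory Filter Topology Set
open scoped ENNReal

noncomputable section

/-- The open unit disk. -/
def Disk : Set ℂ := Metric.ball 0 1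

/-- The hyperbolic (Poincaré) distance on the unit disk:
`d(z,w) = arcosh (1 + 2|z-w|² / ((1-|z|²)(1-|w|²)))`. -/
def hDist (z w : ℂ) : ℝ :=
  Real.log ((1 + 2 * (‖z - w‖)^2 / ((1 - (‖z‖)^2) * (1 - (‖w‖)^2))) +
    Real.sqrt ((1 + 2 * (‖z - w‖)^2 / ((1 - (‖z‖)^2) * (1 - (‖w‖)^2)))^2 - 1))

/-- A Möbius transformation preserving the unit disk. -/
def IsDiskMobius (T : ℂ → ℂ) : Prop :=
  ∃ u α : ℂ, ‖u‖ = 1 ∧ ‖α‖ < 1 ∧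
    ∀ z : ℂ, T z = u * (z - α) / (1 - (starRingEnd ℂ) α * z)

/-- `z` is an (interior) point of the hyperbolic geodesic of the unit disk with ideal
endpoints `a, b` on the unit circle. -/
def onGeod (a b z : ℂ) : Prop :=
  z ∈ Disk ∧ ‖(z - a) * (z - b)‖ = (1 - (‖z‖)^2) / 2 * ‖a - b‖

/-- The space of geodesics of the unit disk: ordered pairs of distinct circle points. -/
def GeodSub : Set (ℂ × ℂ) :=
  {p : ℂ × ℂ | ‖p.1‖ = 1 ∧ ‖p.2‖ = 1 ∧ p.1 ≠ p.2}

/-- The set of geodesics crossing the closed hyperbolic geodesic arc `[z,w]`. -/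
def crossing (z w : ℂ) : Set (ℂ × ℂ) :=
  {g ∈ GeodSub | ∃ u ∈ Disk, onGeod g.1 g.2 u ∧ hDist z u + hDist u w = hDist z w}

/-- The Thurston norm of a measure on the space of geodesics:
the supremum of the masses of the sets of geodesics crossing a geodesic arc of
hyperbolic length `1`. -/
def mnorm (μ : Measure (ℂ × ℂ)) : ℝ≥0∞ :=
  ⨆ (z : ℂ) (w : ℂ) (_ : z ∈ Disk) (_ : w ∈ Disk) (_ : hDist z w = 1), μ (crossing z w)

/-- A geodesic lamination: a relatively closed set of pairwise non-crossing geodesics. -/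
def GeodesicLamination (Λ : Set (ℂ × ℂ)) : Prop :=
  Λ ⊆ GeodSub ∧ closure Λ ∩ GeodSub ⊆ Λ ∧
  ∀ g ∈ Λ, ∀ g' ∈ Λ, ∀ z : ℂ, onGeod g.1 g.2 z → onGeod g'.1 g'.2 z →
    ({g.1, g.2} : Set ℂ) = {g'.1, g'.2}

/-- The union of the geodesics of a lamination, as a subset of the disk. -/
def lamSet (Λ : Set (ℂ × ℂ)) : Set ℂ := {z : ℂ | ∃ g ∈ Λ, onGeod g.1 g.2 z}

/-- A stratum of a geodesic lamination: a geodesic of the lamination, or a connected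
component of the complement of the lamination in the disk. -/
def IsStratum (Λ : Set (ℂ × ℂ)) (A : Set ℂ) : Prop :=
  (∃ g ∈ Λ, A = {z : ℂ | onGeod g.1 g.2 z}) ∨
  (∃ z ∈ Disk \ lamSet Λ, A = connectedComponentIn (Disk \ lamSet Λ) z)

/-- `h` is a hyperbolic translation of the unit disk whose axis (the geodesic with ideal
endpoints `q`, `p`) separates `A` from `B` and which translates `B` to the left as seen
from `A`: after a Möbius change of coordinates taking `q ↦ -1`, `p ↦ 1` (so that `A` lies
on the left of the axis oriented from `q` to `p`), `h` becomes the hyperbolic translation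
`z ↦ (z + t)/(1 + t z)`, `0 < t < 1`, towards the attracting fixed point `p`. -/
def IsLeftTranslationFor (h : ℂ → ℂ) (A B : Set ℂ) : Prop :=
  ∃ (q p : ℂ) (M : ℂ → ℂ) (t : ℝ), IsDiskMobius M ∧
    ‖q‖ = 1 ∧ ‖p‖ = 1 ∧ M q = -1 ∧ M p = 1 ∧ 0 < t ∧ t < 1 ∧
    (∀ z : ℂ, ‖z‖ ≤ 1 → M (h z) = (M z + (t : ℂ)) / (1 + (t : ℂ) * M z)) ∧
    (∀ a ∈ A, a ∈ Disk → ¬ onGeod q p a → 0 < (M a).im) ∧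
    (∀ b ∈ B, b ∈ Disk → ¬ onGeod q p b → (M b).im < 0)

/-- An earthquake of the unit disk with support lamination `Λ` (Thurston):  a bijection of
the disk which restricts to a hyperbolic isometry on each stratum of `Λ`, such that the
comparison isometry `E|_B ∘ (E|_A)⁻¹` of any two distinct strata is a hyperbolic
translation whose axis separates `A` from `B` and which translates `B` to the left as
seen from `A`. -/
def IsEarthquake (E : ℂ → ℂ) (Λ : Set (ℂ × ℂ)) : Prop :=
  GeodesicLamination Λ ∧ Set.BijOn E Disk Disk ∧
  (∀ A : Set ℂ, IsStratum Λ A → ∃ T : ℂ → ℂ, IsDiskMobius T ∧ Set.EqOn E T A) ∧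
  (∀ A B : Set ℂ, IsStratum Λ A → IsStratum Λ B → A ≠ B →
    ∃ TA TB SA : ℂ → ℂ, IsDiskMobius TA ∧ IsDiskMobius TB ∧ IsDiskMobius SA ∧
      (∀ z : ℂ, ‖z‖ ≤ 1 → SA (TA z) = z) ∧
      Set.EqOn E TA A ∧ Set.EqOn E TB B ∧
      IsLeftTranslationFor (TB ∘ SA) A B)

/-- The hyperbolic translation length of a map of the disk. -/
def transLength (h : ℂ → ℂ) : ℝ := sInf {r : ℝ | ∃ z ∈ Disk, r = hDist z (h z)}

/-- `h` represents the comparison isometry `E|_B ∘ (E|_A)⁻¹` of the strata `A`, `B`. -/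
def ComparisonIs (E : ℂ → ℂ) (A B : Set ℂ) (h : ℂ → ℂ) : Prop :=
  ∃ TA TB SA : ℂ → ℂ, IsDiskMobius TA ∧ IsDiskMobius TB ∧ IsDiskMobius SA ∧
    (∀ z : ℂ, ‖z‖ ≤ 1 → SA (TA z) = z) ∧
    Set.EqOn E TA A ∧ Set.EqOn E TB B ∧ h = TB ∘ SA

/-- The translation length of the comparison isometry of two strata. -/
def compLen (E : ℂ → ℂ) (A B : Set ℂ) : ℝ :=
  sInf {r : ℝ | ∃ h : ℂ → ℂ, ComparisonIs E A B h ∧ r = transLength h}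

/-- `μ` is the earthquake measure of the earthquake `E` with support `Λ` (Thurston):
`μ` is a positive Radon measure on the space of geodesics whose support is the geodesic
lamination `Λ`, and for every closed geodesic arc `[z,w]`, the `μ`-mass of the geodesics
crossing `[z,w]` is approximated by the sums of translation lengths of the comparison
isometries of finitely many consecutive strata meeting `[z,w]`, as the gaps between
adjacent chosen strata tend to zero. -/
def EarthquakeMeasureOf (E : ℂ → ℂ) (Λ : Set (ℂ × ℂ)) (μ : Measure (ℂ × ℂ)) : Prop :=
  IsEarthquake E Λ ∧ μ Λᶜ = 0 ∧
  (∀ U : Set (ℂ × ℂ), IsOpen U → (U ∩ Λ).Nonempty → μ U ≠ 0) ∧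
  (∀ z ∈ Disk, ∀ w ∈ Disk, ∀ ε : ℝ, 0 < ε → ∃ δ : ℝ, 0 < δ ∧
    ∀ (N : ℕ) (u : Fin (N + 1) → ℂ) (St : Fin (N + 1) → Set ℂ),
      (∀ i, IsStratum Λ (St i) ∧ u i ∈ St i ∧ u i ∈ Disk ∧
        hDist z (u i) + hDist (u i) w = hDist z w) →
      (∀ i j : Fin (N + 1), i ≤ j → hDist z (u i) ≤ hDist z (u j)) →
      Function.Injective St →
      hDist z (u 0) < δ → hDist (u (Fin.last N)) w < δ →
      (∀ i : Fin N, hDist (u i.castSucc) (u i.succ) < δ) →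
      |(∑ i : Fin N, compLen E (St i.castSucc) (St i.succ)) - (μ (crossing z w)).toReal| < ε)

/-- `h` is (the boundary value of) an earthquake of the unit disk with earthquake
measure `μ`: `h` is the continuous extension to the unit circle of an earthquake map
whose Thurston earthquake measure is `μ`. -/
def EarthquakeBoundary (μ : Measure (ℂ × ℂ)) (h : ℂ → ℂ) : Prop :=
  ∃ (E : ℂ → ℂ) (Λ : Set (ℂ × ℂ)), EarthquakeMeasureOf E Λ μ ∧
    ∀ x : ℂ, ‖x‖ = 1 → Filter.Tendsto E (nhdsWithin x Disk) (nhds (h x))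




set_option linter.unusedSectionVars false
set_option maxHeartbeats 1000000

namespace ParabAux

/-! ### Cayley transform between the disk and the upper half-plane -/

/-- half-plane to disk -/
def Dmap (w : ℂ) : ℂ := (w - Complex.I) / (w + Complex.I)
/-- disk to half-plane -/
def Cmap (z : ℂ) : ℂ := Complex.I * (1 + z) / (1 - z)

lemma addI_ne (w : ℂ) (h : 0 ≤ w.im) : w + Complex.I ≠ 0 := by
  intro h0
  have := congrArg Complex.im h0
  simp at this
  linarith

lemma normSq_addI_pos (w : ℂ) (h : 0 ≤ w.im) : 0 < Complex.normSq (w + Complex.I) := by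
  rw [Complex.normSq_pos]; exact addI_ne w h

lemma one_sub_absDmap (w : ℂ) (h : 0 < w.im) :
    1 - (‖Dmap w‖)^2 = 4 * w.im / Complex.normSq (w + Complex.I) := by
  have hne : Complex.normSq (w + Complex.I) ≠ 0 := (normSq_addI_pos w h.le).ne'
  rw [Complex.sq_norm, Dmap, Complex.normSq_div]
  rw [eq_div_iff hne, sub_mul, div_mul_cancel₀ _ hne]
  simp [Complex.normSq_apply, Complex.add_re, Complex.add_im, Complex.sub_re, Complex.sub_im]
  ring

lemma Dmap_mem_disk (w : ℂ) (h : 0 < w.im) : Dmap w ∈ Disk := by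
  have h4 : 0 < 4 * w.im / Complex.normSq (w + Complex.I) :=
    div_pos (by linarith) (normSq_addI_pos w h.le)
  have := one_sub_absDmap w h
  have habs : (‖Dmap w‖)^2 < 1 := by linarith
  simp only [Disk, Metric.mem_ball, dist_zero_right]
  nlinarith [norm_nonneg (Dmap w)]

lemma Dmap_sub (z w : ℂ) (hz : 0 ≤ z.im) (hw : 0 ≤ w.im) :
    Dmap z - Dmap w = 2 * Complex.I * (z - w) / ((z + Complex.I) * (w + Complex.I)) := by
  rw [Dmap, Dmap, div_sub_div _ _ (addI_ne z hz) (addI_ne w hw)]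
  congr 1
  ring

lemma hDist_Dmap (z w : ℂ) (hz : 0 < z.im) (hw : 0 < w.im) :
    hDist (Dmap z) (Dmap w) =
      Real.log ((1 + Complex.normSq (z - w) / (2 * z.im * w.im)) +
        Real.sqrt ((1 + Complex.normSq (z - w) / (2 * z.im * w.im))^2 - 1)) := by
  have hE : 1 + 2 * (‖Dmap z - Dmap w‖)^2 /
      ((1 - (‖Dmap z‖)^2) * (1 - (‖Dmap w‖)^2)) =
      1 + Complex.normSq (z - w) / (2 * z.im * w.im) := by
    rw [one_sub_absDmap z hz, one_sub_absDmap w hw, Dmap_sub z w hz.le hw.le,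
      Complex.sq_norm, Complex.normSq_div, Complex.normSq_mul, Complex.normSq_mul,
      Complex.normSq_mul]
    have h1 : Complex.normSq (z + Complex.I) ≠ 0 := (normSq_addI_pos z hz.le).ne'
    have h2 : Complex.normSq (w + Complex.I) ≠ 0 := (normSq_addI_pos w hw.le).ne'
    have h3 : z.im ≠ 0 := hz.ne'
    have h4 : w.im ≠ 0 := hw.ne'
    have h5 : Complex.normSq 2 = 4 := by simp [Complex.normSq_apply]; norm_num
    have h6 : Complex.normSq Complex.I = 1 := Complex.normSq_I
    rw [h5, h6]
    field_simp
    ring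
  rw [hDist, hE]

/-- point on the semicircle of center `c`, radius `R`, parametrized by `t = tan (θ/2)`. -/
def Pt (c R t : ℝ) : ℂ := ⟨c + R * (1 - t^2) / (1 + t^2), 2 * R * t / (1 + t^2)⟩

lemma Pt_im_pos (c R t : ℝ) (hR : 0 < R) (ht : 0 < t) : 0 < (Pt c R t).im := by
  have : (0:ℝ) < 1 + t^2 := by positivity
  exact div_pos (by positivity) this

lemma hDist_Pt (c R t1 t2 : ℝ) (hR : 0 < R) (ht2 : 0 < t2) (hle : t2 ≤ t1) :
    hDist (Dmap (Pt c R t1)) (Dmap (Pt c R t2)) = Real.log t1 - Real.log t2 := by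
  have ht1 : 0 < t1 := lt_of_lt_of_le ht2 hle
  rw [hDist_Dmap _ _ (Pt_im_pos c R t1 hR ht1) (Pt_im_pos c R t2 hR ht2)]
  have hd1 : (0:ℝ) < 1 + t1^2 := by positivity
  have hd2 : (0:ℝ) < 1 + t2^2 := by positivity
  have hY : 1 + Complex.normSq (Pt c R t1 - Pt c R t2) / (2 * (Pt c R t1).im * (Pt c R t2).im)
      = (t1^2 + t2^2) / (2 * t1 * t2) := by
    simp only [Pt, Complex.normSq_apply, Complex.sub_re, Complex.sub_im]
    field_simp
    ring
  rw [hY]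
  have hsq : ((t1^2 + t2^2) / (2 * t1 * t2))^2 - 1 = ((t1^2 - t2^2) / (2 * t1 * t2))^2 := by
    field_simp
    ring
  rw [hsq, Real.sqrt_sq (div_nonneg (by nlinarith) (by positivity))]
  have : (t1^2 + t2^2) / (2 * t1 * t2) + (t1^2 - t2^2) / (2 * t1 * t2) = t1 / t2 := by
    field_simp
    ring
  rw [this, Real.log_div ht1.ne' ht2.ne']

lemma abs_Dmap_real (x : ℝ) : ‖Dmap (x:ℂ)‖ = 1 := by
  rw [Dmap, norm_div]
  rw [div_eq_one_iff_eq (norm_ne_zero_iff.mpr (addI_ne _ (by simp)))]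
  rw [← Complex.norm_conj ((x:ℂ) + Complex.I)]
  congr 1
  simp [Complex.ext_iff]

lemma Dmap_real_ne_one (x : ℝ) : Dmap (x:ℂ) ≠ 1 := by
  intro h
  rw [Dmap, div_eq_one_iff_eq (addI_ne _ (by simp))] at h
  have := congrArg Complex.im h
  simp at this
  linarith

lemma Dmap_real_inj (x y : ℝ) (h : Dmap (x:ℂ) = Dmap (y:ℂ)) : x = y := by
  rw [Dmap, Dmap, div_eq_div_iff (addI_ne _ (by simp)) (addI_ne _ (by simp))] at h
  have h2 : (2:ℂ) * Complex.I * x = 2 * Complex.I * y := by linear_combination h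
  have h3 : (x:ℂ) = y := by
    field_simp at h2
    exact_mod_cast h2
  exact_mod_cast h3

lemma Dmap_sub_one (w : ℂ) (hw : 0 ≤ w.im) :
    Dmap w - 1 = -2 * Complex.I / (w + Complex.I) := by
  rw [Dmap, div_sub_one (addI_ne w hw)]
  congr 1
  ring

lemma onGeod_vertical (x y : ℝ) (hy : 0 < y) :
    onGeod 1 (Dmap (x:ℂ)) (Dmap ⟨x, y⟩) := by
  have him : (⟨x, y⟩ : ℂ).im = y := rfl
  have hd := Dmap_mem_disk ⟨x, y⟩ (by rw [him]; exact hy)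
  refine ⟨hd, ?_⟩
  have habs : ‖Dmap ⟨x, y⟩‖ ≤ 1 := by
    simp only [Disk, Metric.mem_ball, dist_zero_right] at hd
    exact hd.le
  have hrhs : 0 ≤ (1 - (‖Dmap ⟨x, y⟩‖)^2) / 2 * ‖1 - Dmap (x:ℂ)‖ := by
    apply mul_nonneg _ (norm_nonneg _)
    nlinarith [norm_nonneg (Dmap ⟨x, y⟩)]
  have hsq : (‖(Dmap ⟨x, y⟩ - 1) * (Dmap ⟨x, y⟩ - Dmap (x:ℂ))‖)^2
      = ((1 - (‖Dmap ⟨x, y⟩‖)^2) / 2 * ‖1 - Dmap (x:ℂ)‖)^2 := by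
    rw [one_sub_absDmap ⟨x, y⟩ (by rw [him]; exact hy), mul_pow, Complex.sq_norm,
      Complex.normSq_mul,
      Dmap_sub_one ⟨x, y⟩ (by rw [him]; exact hy.le),
      Dmap_sub ⟨x, y⟩ (x:ℂ) (by rw [him]; exact hy.le) (by simp)]
    have h1 : Complex.normSq ((⟨x, y⟩:ℂ) + Complex.I) ≠ 0 :=
      (normSq_addI_pos _ (by rw [him]; exact hy.le)).ne'
    have h2 : Complex.normSq ((x:ℂ) + Complex.I) ≠ 0 := (normSq_addI_pos _ (by simp)).ne'
    have hone : (1:ℂ) - Dmap (x:ℂ) = -(Dmap (x:ℂ) - 1) := by ring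
    rw [hone, norm_neg, Dmap_sub_one (x:ℂ) (by simp), Complex.sq_norm,
      Complex.normSq_div, Complex.normSq_div, Complex.normSq_div, Complex.normSq_mul,
      Complex.normSq_mul, Complex.normSq_mul]
    have h5 : Complex.normSq 2 = 4 := by simp [Complex.normSq_apply]; norm_num
    have h6 : Complex.normSq (-2 : ℂ) = 4 := by
      simp [Complex.normSq_apply]; norm_num
    rw [h5, h6, Complex.normSq_I, Complex.normSq_mul]
    have h7 : Complex.normSq ((⟨x, y⟩:ℂ) - (x:ℂ)) = y^2 := by
      simp [Complex.normSq_apply, Complex.ext_iff, Complex.sub_re, Complex.sub_im]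
      ring
    rw [h7]
    field_simp
    ring
  have hL : 0 ≤ ‖(Dmap ⟨x, y⟩ - 1) * (Dmap ⟨x, y⟩ - Dmap (x:ℂ))‖ :=
    norm_nonneg _
  nlinarith [hsq, hL, hrhs]

lemma Dmap_Cmap (z : ℂ) (hz : z ≠ 1) : Dmap (Cmap z) = z := by
  have h1z : 1 - z ≠ 0 := sub_ne_zero.mpr (Ne.symm hz)
  have h2 : Cmap z + Complex.I = 2 * Complex.I / (1 - z) := by
    rw [Cmap]; field_simp; ring
  have h3 : Cmap z - Complex.I = 2 * Complex.I * z / (1 - z) := by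
    rw [Cmap]; field_simp; ring
  rw [Dmap, h2, h3]
  have hI : (2 : ℂ) * Complex.I ≠ 0 := by simp [Complex.I_ne_zero]
  rw [div_div_div_comm, div_self h1z, div_one, mul_comm, mul_div_assoc, div_self hI, mul_one]

lemma Cmap_real (z : ℂ) (h1 : ‖z‖ = 1) (hz1 : z ≠ 1) :
    Cmap z = ((-2 * z.im / Complex.normSq (1 - z) : ℝ) : ℂ) := by
  have hns : Complex.normSq z = 1 := by rw [← Complex.sq_norm, h1]; norm_num
  have h1z : (1 : ℂ) - z ≠ 0 := sub_ne_zero.mpr (Ne.symm hz1)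
  have hnsz : Complex.normSq (1 - z) ≠ 0 := (Complex.normSq_pos.mpr h1z).ne'
  rw [Complex.normSq_apply] at hns
  apply Complex.ext
  · simp only [Cmap, Complex.div_re, Complex.mul_re, Complex.mul_im, Complex.add_re,
      Complex.add_im, Complex.one_re, Complex.one_im, Complex.I_re, Complex.I_im,
      Complex.sub_re, Complex.sub_im, Complex.ofReal_re]
    rw [Complex.normSq_apply] at hnsz ⊢
    field_simp
    ring
  · simp only [Cmap, Complex.div_im, Complex.mul_re, Complex.mul_im, Complex.add_re,
      Complex.add_im, Complex.one_re, Complex.one_im, Complex.I_re, Complex.I_im,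
      Complex.sub_re, Complex.sub_im, Complex.ofReal_im]
    rw [div_sub_div_same, div_eq_zero_iff]
    left
    nlinarith [hns]

/-! ### Structure of the parabolic map -/

section Astruct
variable (A : ℂ → ℂ) (u α : ℂ)
  (hu : ‖u‖ = 1) (hα : ‖α‖ < 1)
  (hAf : ∀ z : ℂ, A z = u * (z - α) / (1 - (starRingEnd ℂ) α * z))
  (hparab : ∀ z : ℂ, ‖z‖ ≤ 1 → (A z = z ↔ z = 1))

include hu hα hAf hparab

lemma den_ne : ∀ z : ℂ, ‖z‖ ≤ 1 → 1 - (starRingEnd ℂ) α * z ≠ 0 := by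
  intro z hz h
  have h1 : (starRingEnd ℂ) α * z = 1 := by linear_combination -h
  have := congrArg (‖·‖) h1
  rw [norm_mul, Complex.norm_conj, norm_one] at this
  nlinarith [norm_nonneg z, norm_nonneg α]

lemma alpha_ne_zero : α ≠ 0 := by
  intro h0
  have hA0 : A 0 = 0 := by rw [hAf 0, h0]; simp
  have := (hparab 0 (by simp)).mp hA0
  simp at this

lemma A_one : A 1 = 1 := (hparab 1 (by simp)).mpr rfl

lemma u_rel : u * (1 - α) = 1 - (starRingEnd ℂ) α := by
  have h1 := A_one A u α hu hα hAf hparab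
  rw [hAf 1] at h1
  rw [div_eq_one_iff_eq (by simpa using den_ne A u α hu hα hAf hparab 1 (by simp))] at h1
  linear_combination h1

lemma u_alpha : u * α = -(starRingEnd ℂ) α := by
  have hα0 := alpha_ne_zero A u α hu hα hAf hparab
  have hβ0 : (starRingEnd ℂ) α ≠ 0 := by simpa using hα0
  set β := (starRingEnd ℂ) α with hβ
  set z₂ : ℂ := -u * α / β with hz₂
  have habs : ‖z₂‖ = 1 := by
    rw [hz₂, norm_div, norm_mul, norm_neg, hu, hβ, Complex.norm_conj, one_mul,
      div_self (norm_ne_zero_iff.mpr hα0)]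
  have hfix : A z₂ = z₂ := by
    rw [hAf z₂, div_eq_iff (den_ne A u α hu hα hAf hparab z₂ habs.le)]
    rw [hz₂]
    field_simp
    linear_combination (-u * β) * (u_rel A u α hu hα hAf hparab)
  have h1 : z₂ = 1 := (hparab z₂ habs.le).mp hfix
  rw [hz₂] at h1
  field_simp at h1
  linear_combination -h1

lemma constraint : α + (starRingEnd ℂ) α = 2 * (α * (starRingEnd ℂ) α) := by
  have h1 := u_rel A u α hu hα hAf hparab
  have h2 := u_alpha A u α hu hα hAf hparab
  have hu1 : u = 1 - 2 * (starRingEnd ℂ) α := by linear_combination h1 + h2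
  rw [hu1] at h2
  linear_combination h2

lemma two_alpha_ne_one : 2 * α - 1 ≠ 0 := by
  intro h
  have hα2 : α = 1/2 := by linear_combination h / 2
  have hc := constraint A u α hu hα hAf hparab
  rw [hα2] at hc
  simp at hc

lemma beta_eq : (starRingEnd ℂ) α = α / (2 * α - 1) := by
  rw [eq_div_iff (two_alpha_ne_one A u α hu hα hAf hparab)]
  linear_combination -(constraint A u α hu hα hAf hparab)

lemma u_eq : u = -1 / (2 * α - 1) := by
  have h1 := u_rel A u α hu hα hAf hparab
  have h2 := u_alpha A u α hu hα hAf hparab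
  have hu1 : u = 1 - 2 * (starRingEnd ℂ) α := by linear_combination h1 + h2
  rw [hu1, beta_eq A u α hu hα hAf hparab]
  have hne := two_alpha_ne_one A u α hu hα hAf hparab
  field_simp
  ring

lemma alpha_re : α.re = Complex.normSq α := by
  have hc := constraint A u α hu hα hAf hparab
  have := congrArg Complex.re hc
  rw [Complex.add_re, Complex.conj_re] at this
  rw [Complex.mul_conj] at this
  simp at this
  linarith [this]

lemma alpha_im_ne : α.im ≠ 0 := by
  intro h0
  have hc := constraint A u α hu hα hAf hparab
  have hconj : (starRingEnd ℂ) α = α := Complex.conj_eq_iff_im.mpr h0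
  rw [hconj] at hc
  have hfac : α * (α - 1) = 0 := by linear_combination -hc/2
  rcases mul_eq_zero.mp hfac with h | h
  · exact alpha_ne_zero A u α hu hα hAf hparab h
  · have : α = 1 := by linear_combination h
    rw [this] at hα
    simp at hα

lemma alpha_ne_one : α - 1 ≠ 0 := by
  intro h
  have : α = 1 := by linear_combination h
  rw [this] at hα; simp at hα

lemma tau_complex : ((2 * α.re / α.im : ℝ) : ℂ) = 2 * Complex.I * α / (α - 1) := by
  have hre := alpha_re A u α hu hα hAf hparab
  have him := alpha_im_ne A u α hu hα hAf hparab
  have h1 := alpha_ne_one A u α hu hα hAf hparab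
  rw [Complex.normSq_apply] at hre
  rw [eq_div_iff h1]
  apply Complex.ext
  · simp only [Complex.ofReal_mul, Complex.mul_re, Complex.mul_im, Complex.sub_re,
      Complex.sub_im, Complex.one_re, Complex.one_im, Complex.I_re, Complex.I_im,
      Complex.ofReal_re, Complex.ofReal_im, Complex.re_ofNat, Complex.im_ofNat]
    field_simp
    ring_nf
    nlinarith [hre]
  · simp only [Complex.ofReal_mul, Complex.mul_re, Complex.mul_im, Complex.sub_re,
      Complex.sub_im, Complex.one_re, Complex.one_im, Complex.I_re, Complex.I_im,
      Complex.ofReal_re, Complex.ofReal_im, Complex.re_ofNat, Complex.im_ofNat]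
    field_simp
    ring

lemma tau_ne : (2 * α.re / α.im : ℝ) ≠ 0 := by
  have hre := alpha_re A u α hu hα hAf hparab
  have him := alpha_im_ne A u α hu hα hAf hparab
  have hα0 := alpha_ne_zero A u α hu hα hAf hparab
  have hpos : 0 < Complex.normSq α := Complex.normSq_pos.mpr hα0
  intro h
  rw [div_eq_zero_iff] at h
  rcases h with h | h
  · rw [hre] at *; nlinarith
  · exact him h

lemma normSq_den_sub (z : ℂ) :
    Complex.normSq (1 - (starRingEnd ℂ) α * z) - Complex.normSq (z - α)
      = (1 - Complex.normSq α) * (1 - Complex.normSq z) := by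
  simp only [Complex.normSq_apply, Complex.mul_re, Complex.mul_im, Complex.sub_re,
    Complex.sub_im, Complex.one_re, Complex.one_im, Complex.conj_re, Complex.conj_im]
  ring

lemma abs_A_le (z : ℂ) (hz : ‖z‖ ≤ 1) : ‖A z‖ ≤ 1 := by
  have hd := den_ne A u α hu hα hAf hparab z hz
  have hnsα : Complex.normSq α < 1 := by
    rw [← Complex.sq_norm]; nlinarith [norm_nonneg α]
  have hnsz : Complex.normSq z ≤ 1 := by
    rw [← Complex.sq_norm]; nlinarith [norm_nonneg z]
  have hkey := normSq_den_sub A u α hu hα hAf hparab z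
  have hdpos : 0 < Complex.normSq (1 - (starRingEnd ℂ) α * z) := Complex.normSq_pos.mpr hd
  have hle : Complex.normSq (z - α) ≤ Complex.normSq (1 - (starRingEnd ℂ) α * z) := by
    nlinarith [Complex.normSq_nonneg (z - α)]
  have hnsu : Complex.normSq u = 1 := by rw [← Complex.sq_norm, hu]; norm_num
  have : Complex.normSq (A z) ≤ 1 := by
    rw [hAf z, Complex.normSq_div, Complex.normSq_mul, hnsu, one_mul]
    rw [div_le_one hdpos]
    exact hle
  rw [← Complex.sq_norm] at this
  nlinarith [norm_nonneg (A z)]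

lemma A_inj (z w : ℂ) (hz : ‖z‖ ≤ 1) (hw : ‖w‖ ≤ 1)
    (h : A z = A w) : z = w := by
  have hdz := den_ne A u α hu hα hAf hparab z hz
  have hdw := den_ne A u α hu hα hAf hparab w hw
  have hu0 : u ≠ 0 := by
    intro h0; rw [h0] at hu; simp at hu
  rw [hAf z, hAf w, div_eq_div_iff hdz hdw] at h
  have h2 : (z - w) * (1 - α * (starRingEnd ℂ) α) = 0 := by
    have := mul_left_cancel₀ hu0 (by linear_combination h :
      u * ((z - α) * (1 - (starRingEnd ℂ) α * w)) = u * ((w - α) * (1 - (starRingEnd ℂ) α * z)))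
    linear_combination this
  have h3 : 1 - α * (starRingEnd ℂ) α ≠ 0 := by
    intro h0
    have h4 : α * (starRingEnd ℂ) α = 1 := by linear_combination -h0
    rw [Complex.mul_conj] at h4
    have := congrArg Complex.re h4
    simp at this
    rw [← Complex.sq_norm] at this
    nlinarith [norm_nonneg α]
  rcases mul_eq_zero.mp h2 with h | h
  · linear_combination h
  · exact absurd h h3

lemma A_ne_one (z : ℂ) (hz : ‖z‖ ≤ 1) (hz1 : z ≠ 1) : A z ≠ 1 := by
  intro h
  exact hz1 (A_inj A u α hu hα hAf hparab z 1 hz (by simp)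
    (by rw [h, A_one A u α hu hα hAf hparab]))

lemma Q_ne (z : ℂ) (hz : ‖z‖ ≤ 1) : (2 * α - 1) - α * z ≠ 0 := by
  have hβz := den_ne A u α hu hα hAf hparab z hz
  have h2a := two_alpha_ne_one A u α hu hα hAf hparab
  intro h
  apply hβz
  rw [beta_eq A u α hu hα hAf hparab]
  have hrep : 1 - α / (2 * α - 1) * z = ((2 * α - 1) - α * z) / (2 * α - 1) := by
    rw [sub_div, div_self h2a]; ring
  rw [hrep, h, zero_div]

lemma A_formula (z : ℂ) (hz : ‖z‖ ≤ 1) :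
    A z = -(z - α) / ((2 * α - 1) - α * z) := by
  have h2a := two_alpha_ne_one A u α hu hα hAf hparab
  have hQ := Q_ne A u α hu hα hAf hparab z hz
  have hden : 1 - α / (2 * α - 1) * z ≠ 0 := by
    have hrep : 1 - α / (2 * α - 1) * z = ((2 * α - 1) - α * z) / (2 * α - 1) := by
      rw [sub_div, div_self h2a]; ring
    rw [hrep]
    exact div_ne_zero hQ h2a
  rw [hAf z, u_eq A u α hu hα hAf hparab, beta_eq A u α hu hα hAf hparab,
    div_eq_div_iff hden hQ]
  field_simp

lemma conj_step (z : ℂ) (hz : ‖z‖ ≤ 1) (hz1 : z ≠ 1) :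
    Cmap (A z) = Cmap z + ((2 * α.re / α.im : ℝ) : ℂ) := by
  have hQ := Q_ne A u α hu hα hAf hparab z hz
  have hα1 := alpha_ne_one A u α hu hα hAf hparab
  have h1z : 1 - z ≠ 0 := sub_ne_zero.mpr (Ne.symm hz1)
  have hAz := A_formula A u α hu hα hAf hparab z hz
  have h1w : 1 - A z ≠ 0 := sub_ne_zero.mpr (Ne.symm (A_ne_one A u α hu hα hAf hparab z hz hz1))
  have h1w' : 1 - -(z - α) / ((2 * α - 1) - α * z) ≠ 0 := by rw [← hAz]; exact h1w
  rw [Cmap, Cmap, tau_complex A u α hu hα hAf hparab, hAz]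
  rw [div_add_div _ _ h1z hα1]
  rw [div_eq_div_iff h1w' (mul_ne_zero h1z hα1)]
  linear_combination (2 * Complex.I * (α - z)) * (mul_inv_cancel₀ hQ)

end Astruct

end ParabAux

/-- The angle metric on the unit circle. -/
def dCircle (x y : ℂ) : ℝ := |Complex.arg (x * (starRingEnd ℂ) y)|

/-- The angle metric on the space of geodesics (pairs of circle points). -/
def dG (p q : ℂ × ℂ) : ℝ := max (dCircle p.1 q.1) (dCircle p.2 q.2)

/-- **A parabolic-invariant lamination with an atom on a geodesic ending at the cusp is
unbounded.**  (Disk model; the cusp is placed at the boundary point `1`, and `A` is a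
parabolic Möbius transformation of the disk fixing only `1`.)  Let `μ` be a measured
lamination whose support `Λ` contains a geodesic `g` with an endpoint at the cusp, and
suppose `Λ` is invariant under the powers `A^{kn}` (`n ∈ ℕ`, fixed `k > 0`) of the
parabolic `A`.  If `g` is an isolated leaf of `Λ` carrying an atom of mass `m > 0` (so
that, by transverse continuity, each translate `A^{kn}(g)` also carries mass at least
`m`), then the transverse measure `μ` is unbounded:
`sup` over unit-length geodesic arcs `I` of `μ(I)` is infinite.  Hence no *bounded*
measured lamination invariant under a parabolic in this way can contain a geodesic
ending at the cusp with positive atomic mass. -/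
theorem parabolic_invariant_atom_unbounded
    (μ : Measure (ℂ × ℂ)) (Λ : Set (ℂ × ℂ)) (A : ℂ → ℂ) (k : ℕ) (g : ℂ × ℂ) (m : ℝ)
    (hΛ : GeodesicLamination Λ) (hsupp : μ Λᶜ = 0)
    (hA : IsDiskMobius A)
    (hparab : ∀ z : ℂ, ‖z‖ ≤ 1 → (A z = z ↔ z = 1))
    (hk : 0 < k)
    (hgΛ : g ∈ Λ) (hcusp : g.1 = 1)
    (hinv : ∀ n : ℕ, ∀ g' ∈ Λ, (A^[k * n] g'.1, A^[k * n] g'.2) ∈ Λ)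
    (hisolated : ∃ ε : ℝ, 0 < ε ∧ ∀ g' ∈ Λ, g' ≠ g → ε ≤ dG g g')
    (hm : 0 < m) (hatom : μ {g} = ENNReal.ofReal m)
    (htranslates : ∀ n : ℕ, ENNReal.ofReal m ≤ μ {(A^[k * n] g.1, A^[k * n] g.2)}) :
    mnorm μ = ⊤ := by
  classical
  obtain ⟨u, α, hu, hα, hAf⟩ := hA
  open ParabAux in
  -- boundary endpoint data for `g`
  have hgG : g ∈ GeodSub := hΛ.1 hgΛ
  obtain ⟨habs1, habs2, hne12⟩ := hgG
  have hg2ne1 : g.2 ≠ 1 := fun h => hne12 (by rw [hcusp, h])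
  set τ : ℝ := 2 * α.re / α.im with hτdef
  have hτ : τ ≠ 0 := ParabAux.tau_ne A u α hu hα hAf hparab
  -- iterates of the second endpoint
  have hiter : ∀ n : ℕ, ‖A^[n] g.2‖ ≤ 1 ∧ A^[n] g.2 ≠ 1 ∧
      ParabAux.Cmap (A^[n] g.2) = ParabAux.Cmap g.2 + (n : ℂ) * (τ : ℂ) := by
    intro n
    induction n with
    | zero =>
      refine ⟨by simpa using habs2.le, by simpa using hg2ne1, by simp⟩
    | succ n ih =>
      rw [Function.iterate_succ_apply']
      refine ⟨ParabAux.abs_A_le A u α hu hα hAf hparab _ ih.1,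
        ParabAux.A_ne_one A u α hu hα hAf hparab _ ih.1 ih.2.1, ?_⟩
      rw [ParabAux.conj_step A u α hu hα hAf hparab _ ih.1 ih.2.1, ih.2.2, ← hτdef]
      push_cast
      ring
  set x0 : ℝ := -2 * g.2.im / Complex.normSq (1 - g.2) with hx0def
  have hx0 : ParabAux.Cmap g.2 = (x0 : ℂ) := ParabAux.Cmap_real g.2 habs2 hg2ne1
  have hAg2 : ∀ n : ℕ, A^[n] g.2 = ParabAux.Dmap ((x0 + n * τ : ℝ) : ℂ) := by
    intro n
    have h := (hiter n).2.2
    have h2 : ParabAux.Cmap (A^[n] g.2) = ((x0 + n * τ : ℝ) : ℂ) := by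
      rw [h, hx0]; push_cast; ring
    rw [← ParabAux.Dmap_Cmap (A^[n] g.2) (hiter n).2.1, h2]
  have hA1iter : ∀ n : ℕ, A^[n] (1:ℂ) = 1 := fun n =>
    Function.iterate_fixed (ParabAux.A_one A u α hu hα hAf hparab) n
  -- the translated geodesics, all ending at the cusp
  set γ : ℕ → ℂ × ℂ := fun n => ((1:ℂ), ParabAux.Dmap ((x0 + (k*n : ℕ) * τ : ℝ) : ℂ)) with hγ
  have hγμ : ∀ n : ℕ, ENNReal.ofReal m ≤ μ {γ n} := by
    intro n
    have h := htranslates n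
    rw [hcusp, hA1iter (k*n), hAg2 (k*n)] at h
    exact h
  have hγinj : Function.Injective γ := by
    intro a b hab
    have h2 := congrArg Prod.snd hab
    simp only [hγ] at h2
    have h3 := ParabAux.Dmap_real_inj _ _ h2
    have h4 : ((k*a : ℕ) : ℝ) * τ = ((k*b : ℕ) : ℝ) * τ := by linarith
    have h5 : ((k*a : ℕ) : ℝ) = ((k*b : ℕ) : ℝ) := mul_right_cancel₀ hτ h4
    have h6 : k*a = k*b := Nat.cast_injective h5
    exact Nat.eq_of_mul_eq_mul_left hk h6
  have hγG : ∀ n : ℕ, γ n ∈ GeodSub := by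
    intro n
    exact ⟨by simp [hγ], ParabAux.abs_Dmap_real _, Ne.symm (ParabAux.Dmap_real_ne_one _)⟩
  -- main estimate: every multiple of the atom mass is ≤ mnorm μ
  have key : ∀ N : ℕ, (N : ℝ≥0∞) * ENNReal.ofReal m ≤ mnorm μ := by
    intro N
    set Dm : ℝ := (N * k : ℕ) * |τ| with hDm
    have hDm0 : 0 ≤ Dm := by positivity
    set R : ℝ := 3 * Dm + 1 with hRdef
    have hR : 0 < R := by positivity
    have he2 : 2 ≤ Real.exp 1 := by
      have := Real.add_one_le_exp 1
      linarith
    set t1 : ℝ := Real.exp (1/2) with ht1def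
    set t2 : ℝ := Real.exp (-(1/2)) with ht2def
    have ht1pos : 0 < t1 := Real.exp_pos _
    have ht2pos : 0 < t2 := Real.exp_pos _
    have ht21 : t2 ≤ t1 := Real.exp_le_exp.mpr (by norm_num)
    set z : ℂ := ParabAux.Dmap (ParabAux.Pt x0 R t1) with hzdef
    set w : ℂ := ParabAux.Dmap (ParabAux.Pt x0 R t2) with hwdef
    have hzD : z ∈ Disk := ParabAux.Dmap_mem_disk _ (ParabAux.Pt_im_pos _ _ _ hR ht1pos)
    have hwD : w ∈ Disk := ParabAux.Dmap_mem_disk _ (ParabAux.Pt_im_pos _ _ _ hR ht2pos)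
    have hzw1 : hDist z w = 1 := by
      rw [hzdef, hwdef, ParabAux.hDist_Pt x0 R t1 t2 hR ht2pos ht21, ht1def, ht2def,
        Real.log_exp, Real.log_exp]
      norm_num
    -- each translated geodesic crosses the arc [z, w]
    have hcross : ∀ n : ℕ, n < N → γ n ∈ crossing z w := by
      intro n hn
      set d : ℝ := ((k*n : ℕ) : ℝ) * τ with hd
      have hdle : |d| ≤ Dm := by
        rw [hd, abs_mul, Nat.abs_cast]
        apply mul_le_mul_of_nonneg_right _ (abs_nonneg τ)
        push_cast
        have h1 : (n:ℝ) ≤ N := by exact_mod_cast hn.le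
        have h2 : (0:ℝ) ≤ k := Nat.cast_nonneg k
        nlinarith
      have habsd := abs_le.mp hdle
      have hRd1 : 0 < R + d := by simp only [hRdef]; linarith
      have hRd2 : 0 < R - d := by simp only [hRdef]; linarith
      set q : ℝ := (R - d) / (R + d) with hq
      have hqpos : 0 < q := div_pos hRd2 hRd1
      set t : ℝ := Real.sqrt q with ht
      have htpos : 0 < t := Real.sqrt_pos.mpr hqpos
      have htsq : t^2 = q := Real.sq_sqrt hqpos.le
      have hq_ub : q ≤ Real.exp 1 := by
        rw [hq, div_le_iff₀ hRd1]
        nlinarith [mul_nonneg (by linarith : (0:ℝ) ≤ Real.exp 1 - 2) hRd1.le]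
      have hq_lb : Real.exp (-1) ≤ q := by
        rw [hq, le_div_iff₀ hRd1]
        have h : R + d ≤ Real.exp 1 * (R - d) := by
          nlinarith [mul_nonneg (by linarith : (0:ℝ) ≤ Real.exp 1 - 2) hRd2.le]
        have hee : Real.exp (-1) * Real.exp 1 = 1 := by
          rw [← Real.exp_add]; norm_num
        calc Real.exp (-1) * (R + d)
            ≤ Real.exp (-1) * (Real.exp 1 * (R - d)) :=
              mul_le_mul_of_nonneg_left h (Real.exp_pos _).le
          _ = R - d := by rw [← mul_assoc, hee, one_mul]
      have ht_le : t ≤ t1 := by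
        rw [ht, ht1def]
        have : Real.exp (1/2) = Real.sqrt (Real.exp 1) := by
          rw [← Real.exp_half]
        rw [this]
        exact Real.sqrt_le_sqrt hq_ub
      have ht_ge : t2 ≤ t := by
        rw [ht, ht2def]
        have : Real.exp (-(1/2)) = Real.sqrt (Real.exp (-1)) := by
          rw [← Real.exp_half]
          norm_num
        rw [this]
        exact Real.sqrt_le_sqrt hq_lb
      have hre : (ParabAux.Pt x0 R t).re = x0 + d := by
        simp only [ParabAux.Pt]
        rw [htsq, hq]
        field_simp
        ring
      have hPt : ParabAux.Pt x0 R t = (⟨x0 + d, (ParabAux.Pt x0 R t).im⟩ : ℂ) := by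
        apply Complex.ext
        · exact hre
        · rfl
      have himpos : 0 < (ParabAux.Pt x0 R t).im := ParabAux.Pt_im_pos _ _ _ hR htpos
      refine ⟨hγG n, ParabAux.Dmap (ParabAux.Pt x0 R t),
        ParabAux.Dmap_mem_disk _ himpos, ?_, ?_⟩
      · -- onGeod
        have h1 : (γ n).1 = (1:ℂ) := rfl
        have h2 : (γ n).2 = ParabAux.Dmap ((x0 + d : ℝ) : ℂ) := by
          simp only [hγ, hd]
        rw [h1, h2, hPt]
        exact ParabAux.onGeod_vertical (x0 + d) _ himpos
      · -- additivity of distance along the arc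
        rw [hzdef, hwdef, ParabAux.hDist_Pt x0 R t1 t hR htpos ht_le,
          ParabAux.hDist_Pt x0 R t t2 hR ht2pos ht_ge,
          ParabAux.hDist_Pt x0 R t1 t2 hR ht2pos ht21]
        ring
    -- measure estimate
    have hsub : (⋃ n ∈ Finset.range N, ({γ n} : Set (ℂ × ℂ))) ⊆ crossing z w := by
      intro p hp
      simp only [Set.mem_iUnion, Finset.mem_range, Set.mem_singleton_iff] at hp
      obtain ⟨n, hn, rfl⟩ := hp
      exact hcross n hn
    have hdisj : (↑(Finset.range N) : Set ℕ).PairwiseDisjoint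
        (fun n => ({γ n} : Set (ℂ × ℂ))) := by
      intro a _ b _ hab
      simp only [Function.onFun, Set.disjoint_singleton_left, Set.mem_singleton_iff]
      exact fun h => hab (hγinj h)
    have hmeas : ∀ n ∈ Finset.range N, MeasurableSet ({γ n} : Set (ℂ × ℂ)) :=
      fun n _ => measurableSet_singleton _
    have hsum := measure_biUnion_finset hdisj hmeas (μ := μ)
    have hchain : (N : ℝ≥0∞) * ENNReal.ofReal m ≤ μ (crossing z w) := by
      calc (N : ℝ≥0∞) * ENNReal.ofReal m
          = ∑ _n ∈ Finset.range N, ENNReal.ofReal m := by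
            rw [Finset.sum_const, Finset.card_range, nsmul_eq_mul]
        _ ≤ ∑ n ∈ Finset.range N, μ {γ n} := Finset.sum_le_sum (fun n _ => hγμ n)
        _ = μ (⋃ n ∈ Finset.range N, ({γ n} : Set (ℂ × ℂ))) := hsum.symm
        _ ≤ μ (crossing z w) := measure_mono hsub
    refine le_trans hchain ?_
    rw [mnorm]
    exact le_iSup_of_le z (le_iSup_of_le w (le_iSup_of_le hzD (le_iSup_of_le hwD
      (le_iSup_of_le hzw1 le_rfl))))
  -- conclude
  by_contra hne
  have hm0 : ENNReal.ofReal m ≠ 0 := (ENNReal.ofReal_pos.mpr hm).ne'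
  have hdivne : mnorm μ / ENNReal.ofReal m ≠ ⊤ :=
    (ENNReal.div_lt_top hne hm0).ne
  obtain ⟨n, hn⟩ := ENNReal.exists_nat_gt hdivne
  have hlt : mnorm μ < (n : ℝ≥0∞) * ENNReal.ofReal m := by
    rw [← ENNReal.div_lt_iff (Or.inl hm0) (Or.inl ENNReal.ofReal_ne_top)]
    exact hn
  exact absurd (key n) (not_le.mpr hlt)


end
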